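/- If a hypergraph H collapses onto a hypergraph H', then the embedded homology groups are isomorphic: H_*(H;R) ≅ H_*(H';R); moreover H_*(ΔH) ≅ H_*(ΔH') and H_*(δH) ≅ H_*(δH'). -/

import Mathlib

/-- A hypergraph: every hyperedge is a nonempty finite set of vertices. -/
def IsHypergraph {V : Type*} [LinearOrder V] (H : Set (Finset V)) : Prop :=
  ∀ e ∈ H, e.Nonempty

/-- The associated simplicial complex `ΔH`: all nonempty subsets of hyperedges of `H`. -/
def assocSC {V : Type*} [LinearOrder V] (H : Set (Finset V)) : Set (Finset V) :=
  {τ | τ.Nonempty ∧ ∃ σ ∈ H, τ ⊆ σ}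

/-- The lower-associated simplicial complex `δH`. -/
def lowerSC {V : Type*} [LinearOrder V] (H : Set (Finset V)) : Set (Finset V) :=
  {σ | σ ∈ H ∧ ∀ τ : Finset V, τ.Nonempty → τ ⊆ σ → τ ∈ H}

/-- The signed boundary of the basis chain corresponding to a finite set `σ` (with the usual
simplicial signs coming from the linear order on the vertices); vertices map to `0`. -/
noncomputable def bdc {V : Type*} [LinearOrder V] (R : Type*) [CommRing R] (σ : Finset V) :
    Finset V →₀ R :=
  if σ.card ≤ 1 then 0
  else ∑ v ∈ σ, ((-1 : R) ^ ((σ.filter (fun x => x < v)).card)) •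
    Finsupp.single (σ.erase v) (1 : R)

/-- The simplicial boundary operator on the free `R`-module with basis all finite subsets of
`V`. -/
noncomputable def bd {V : Type*} [LinearOrder V] (R : Type*) [CommRing R] :
    (Finset V →₀ R) →ₗ[R] (Finset V →₀ R) :=
  Finsupp.lsum R fun σ => LinearMap.toSpanSingleton R (Finset V →₀ R) (bdc R σ)

/-- `R(H)_n`: the free `R`-module on the `n`-dimensional hyperedges of `H`, as a submodule of
the chains. -/
noncomputable def RHmod {V : Type*} [LinearOrder V] (R : Type*) [CommRing R] (H : Set (Finset V)) (n : ℕ) :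
    Submodule R (Finset V →₀ R) :=
  Submodule.span R {x | ∃ σ ∈ H, σ.card = n + 1 ∧ x = Finsupp.single σ (1 : R)}

/-- The infimum chain complex `Inf_n(R(H)_*) = R(H)_n ⊓ ∂⁻¹(R(H)_{n-1})`. -/
noncomputable def infC {V : Type*} [LinearOrder V] (R : Type*) [CommRing R]
    (H : Set (Finset V)) (n : ℕ) : Submodule R (Finset V →₀ R) :=
  RHmod R H n ⊓ Submodule.comap (bd R) (RHmod R H (n - 1))

/-- The supremum chain complex `Sup_n(R(H)_*) = R(H)_n + ∂(R(H)_{n+1})`. -/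
noncomputable def supC {V : Type*} [LinearOrder V] (R : Type*) [CommRing R]
    (H : Set (Finset V)) (n : ℕ) : Submodule R (Finset V →₀ R) :=
  RHmod R H n ⊔ Submodule.map (bd R) (RHmod R H (n + 1))

/-- The `n`-cycles of the infimum chain complex. -/
noncomputable def cycC {V : Type*} [LinearOrder V] (R : Type*) [CommRing R]
    (H : Set (Finset V)) (n : ℕ) : Submodule R (Finset V →₀ R) :=
  infC R H n ⊓ LinearMap.ker (bd R)

/-- The `n`-th embedded homology of the hypergraph `H` with coefficients in `R`: the homology
of the infimum chain complex, realized as the image of the `n`-cycles in the quotient of the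
chains by the boundaries `∂(Inf_{n+1})`. -/
@[reducible] noncomputable def emH {V : Type*} [LinearOrder V] (R : Type*) [CommRing R]
    (H : Set (Finset V)) (n : ℕ) :=
  ↥(Submodule.map (Submodule.mkQ (Submodule.map (bd R) (infC R H (n + 1)))) (cycC R H n))

/-- A single elementary collapse of `H` onto `H'` removing the free pair `σ < τ`:
`dim τ = dim σ + 1`, `σ` is not a proper subset of any hyperedge of `H` other than `τ`,
every nonempty proper subset of `τ` is a hyperedge of `H`, and `H' = H \\ {σ, τ}`. -/
def IsElemCollapse {V : Type*} [LinearOrder V] (H H' : Set (Finset V))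
    (s t : Finset V) : Prop :=
  s ∈ H ∧ t ∈ H ∧ s ⊂ t ∧ t.card = s.card + 1 ∧
  (∀ ρ ∈ H, s ⊂ ρ → ρ = t) ∧
  (∀ η : Finset V, η.Nonempty → η ⊂ t → η ∈ H) ∧
  H' = H \ {s, t}

/-- `CollapseSeq H H' L`: `H` is transformed into `H'` by the sequence `L` of single
elementary collapses (each list entry records the removed pair). -/
def CollapseSeq {V : Type*} [LinearOrder V] :
    Set (Finset V) → Set (Finset V) → List (Finset V × Finset V) → Prop
  | H, H', [] => H' = H
  | H, H', p :: L => ∃ K : Set (Finset V), IsElemCollapse H K p.1 p.2 ∧ CollapseSeq K H' L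

/-- `H` collapses onto `H'`: a finite sequence of single elementary collapses transforms
`H` into `H'`. -/
def Collapses {V : Type*} [LinearOrder V] (H H' : Set (Finset V)) : Prop :=
  Relation.ReflTransGen (fun A B => ∃ s t : Finset V, IsElemCollapse A B s t) H H'

section Aux
variable {V : Type*} [LinearOrder V] {R : Type*} [CommRing R]

lemma bd_single (σ : Finset V) (c : R) :
    bd R (Finsupp.single σ c) = c • bdc R σ := by
  simp [bd, Finsupp.lsum_single, LinearMap.toSpanSingleton_apply]

lemma bdc_eq_sum {σ : Finset V} (h : 2 ≤ σ.card) :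
    bdc R σ = ∑ v ∈ σ, ((-1 : R) ^ ((σ.filter (fun x => x < v)).card)) •
      Finsupp.single (σ.erase v) (1 : R) := by
  rw [bdc, if_neg (by omega)]

lemma bdc_eq_zero' {σ : Finset V} (h : σ.card ≤ 1) : bdc R σ = (0 : Finset V →₀ R) := by
  rw [bdc, if_pos h]

lemma bdc_apply_eq_zero {σ ρ : Finset V} (h : ∀ v ∈ σ, σ.erase v ≠ ρ) :
    (bdc R σ) ρ = 0 := by
  by_cases hc : σ.card ≤ 1
  · rw [bdc_eq_zero' hc]; rfl
  · rw [bdc_eq_sum (by omega), Finsupp.finset_sum_apply]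
    refine Finset.sum_eq_zero fun v hv => ?_
    rw [Finsupp.smul_apply, Finsupp.single_apply, if_neg (h v hv), smul_zero]

lemma bdc_apply_erase {σ : Finset V} {v : V} (hv : v ∈ σ) (h : 2 ≤ σ.card) :
    (bdc R σ) (σ.erase v) = (-1 : R) ^ ((σ.filter (fun x => x < v)).card) := by
  rw [bdc_eq_sum h, Finsupp.finset_sum_apply, Finset.sum_eq_single v]
  · simp
  · intro w hw hne
    rw [Finsupp.smul_apply, Finsupp.single_apply,
      if_neg (fun hcon => hne (Finset.erase_injOn σ hw hv hcon)), smul_zero]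
  · intro h'; exact absurd hv h'



end Aux


section BdBd
variable {V : Type*} [LinearOrder V] {R : Type*} [CommRing R]

lemma bd_bdc (σ : Finset V) : bd R (bdc R σ) = 0 := by
  by_cases h1 : σ.card ≤ 1
  · rw [bdc_eq_zero' h1, map_zero]
  push_neg at h1
  rw [bdc_eq_sum h1, map_sum]
  by_cases h2 : σ.card = 2
  · refine Finset.sum_eq_zero fun v hv => ?_
    rw [map_smul, bd_single, one_smul, bdc_eq_zero' (by rw [Finset.card_erase_of_mem hv]; omega),
      smul_zero]
  have h3 : 3 ≤ σ.card := by omega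
  have key : ∀ v ∈ σ, (bd R) (((-1:R) ^ ((σ.filter (fun x => x < v)).card)) •
      Finsupp.single (σ.erase v) (1:R)) =
      ∑ w ∈ σ.erase v, ((-1:R) ^ ((σ.filter (fun x => x < v)).card) *
        (-1:R) ^ (((σ.erase v).filter (fun x => x < w)).card)) •
        Finsupp.single ((σ.erase v).erase w) (1:R) := by
    intro v hv
    rw [map_smul, bd_single, one_smul,
      bdc_eq_sum (by rw [Finset.card_erase_of_mem hv]; omega), Finset.smul_sum]
    exact Finset.sum_congr rfl fun w hw => by rw [smul_smul]
  rw [Finset.sum_congr rfl key, ← Finset.sum_sigma σ (fun v => σ.erase v)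
    (fun p => ((-1:R) ^ ((σ.filter (fun x => x < p.1)).card) *
        (-1:R) ^ (((σ.erase p.1).filter (fun x => x < p.2)).card)) •
        Finsupp.single ((σ.erase p.1).erase p.2) (1:R))]
  refine Finset.sum_involution (fun p hp => ⟨p.2, p.1⟩) ?_ ?_ ?_ ?_
  · rintro ⟨v, w⟩ hp
    rw [Finset.mem_sigma] at hp
    obtain ⟨hv, hw'⟩ := hp
    have hv : v ∈ σ := hv
    have hw' : w ∈ σ.erase v := hw'
    have hw : w ∈ σ := Finset.mem_of_mem_erase hw'
    have hne : w ≠ v := Finset.ne_of_mem_erase hw'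
    dsimp only
    rw [Finset.erase_right_comm (a := w) (b := v)]
    rw [← add_smul]
    convert zero_smul R _
    -- sign cancellation
    rcases hne.lt_or_gt with hlt | hlt
    · -- w < v
      have e1 : ((σ.erase v).filter (fun x => x < w)).card 
          = (σ.filter (fun x => x < w)).card := by
        rw [Finset.filter_erase, Finset.erase_eq_of_notMem]
        simp only [Finset.mem_filter, not_and]
        exact fun _ => not_lt_of_gt hlt
      have e2 : ((σ.erase w).filter (fun x => x < v)).card 
          = (σ.filter (fun x => x < v)).card - 1 := by
        have hmem : w ∈ σ.filter (fun x => x < v) := Finset.mem_filter.mpr ⟨hw, hlt⟩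
        rw [Finset.filter_erase, Finset.card_erase_of_mem hmem]
      have e3 : 1 ≤ (σ.filter (fun x => x < v)).card := by
        have hmem : w ∈ σ.filter (fun x => x < v) := Finset.mem_filter.mpr ⟨hw, hlt⟩
        exact Finset.card_pos.mpr ⟨w, hmem⟩
      rw [e1, e2, ← pow_add, ← pow_add]
      set a := (σ.filter (fun x => x < v)).card with ha
      set b := (σ.filter (fun x => x < w)).card with hb
      have : a + b = (b + (a-1)) + 1 := by omega
      rw [this, pow_succ]; ring
    · -- v < w
      have e1 : ((σ.erase w).filter (fun x => x < v)).card 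
          = (σ.filter (fun x => x < v)).card := by
        rw [Finset.filter_erase, Finset.erase_eq_of_notMem]
        simp only [Finset.mem_filter, not_and]
        exact fun _ => not_lt_of_gt hlt
      have e2 : ((σ.erase v).filter (fun x => x < w)).card 
          = (σ.filter (fun x => x < w)).card - 1 := by
        have hmem : v ∈ σ.filter (fun x => x < w) := Finset.mem_filter.mpr ⟨hv, hlt⟩
        rw [Finset.filter_erase, Finset.card_erase_of_mem hmem]
      have e3 : 1 ≤ (σ.filter (fun x => x < w)).card := by
        have hmem : v ∈ σ.filter (fun x => x < w) := Finset.mem_filter.mpr ⟨hv, hlt⟩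
        exact Finset.card_pos.mpr ⟨v, hmem⟩
      rw [e1, e2, ← pow_add, ← pow_add]
      set a := (σ.filter (fun x => x < w)).card with ha
      set b := (σ.filter (fun x => x < v)).card with hb
      have : a + (a - 1) + 1 = a + a := by omega
      have h4 : b + (a - 1) + 1 = a + b := by omega
      rw [show a + b = (b + (a-1)) + 1 by omega, pow_succ]; ring
  · rintro ⟨v, w⟩ hp hne
    rw [Finset.mem_sigma] at hp
    intro hcon
    have : w = v := by
      have := congrArg Sigma.fst hcon
      simpa using this
    exact Finset.ne_of_mem_erase hp.2 this
  · rintro ⟨v, w⟩ hp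
    rw [Finset.mem_sigma] at hp ⊢
    exact ⟨Finset.mem_of_mem_erase hp.2,
      Finset.mem_erase.mpr ⟨(Finset.ne_of_mem_erase hp.2).symm, hp.1⟩⟩
  · rintro ⟨v, w⟩ hp; rfl

lemma bd_bd (x : Finset V →₀ R) : bd R (bd R x) = 0 := by
  induction x using Finsupp.induction_linear with
  | zero => simp
  | add f g hf hg => rw [map_add, map_add, hf, hg, add_zero]
  | single σ c => rw [bd_single, map_smul, bd_bdc, smul_zero]

end BdBd

section Aux2
variable {V : Type*} [LinearOrder V] {R : Type*} [CommRing R]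

/-- choose the vertex of `t \ s` -/
lemma exists_v0 {s t : Finset V} (hst : s ⊂ t) (hcard : t.card = s.card + 1) :
    ∃ v ∈ t, t.erase v = s ∧ ∀ w, t.erase w = s → w = v := by
  have hsub : s ⊆ t := hst.subset
  have h1 : (t \ s).card = 1 := by rw [Finset.card_sdiff_of_subset hsub]; omega
  obtain ⟨v, hv⟩ := Finset.card_eq_one.mp h1
  have hvt : v ∈ t := by
    have : v ∈ t \ s := hv ▸ Finset.mem_singleton_self v
    exact (Finset.mem_sdiff.mp this).1
  have herase : t.erase v = s := by
    rw [Finset.erase_eq, ← hv, Finset.sdiff_sdiff_self_left, Finset.inter_eq_right.mpr hsub]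
  refine ⟨v, hvt, herase, fun w hw => ?_⟩
  have hwt : w ∈ t := by
    by_contra hcon
    rw [Finset.erase_eq_of_notMem hcon] at hw
    exact hst.ne hw.symm
  have hws : w ∉ s := by
    intro hcon
    rw [← hw] at hcon
    exact (Finset.notMem_erase w t) hcon
  have : w ∈ t \ s := Finset.mem_sdiff.mpr ⟨hwt, hws⟩
  rw [hv, Finset.mem_singleton] at this
  exact this

lemma eps_exists {s t : Finset V} (hst : s ⊂ t) (hcard : t.card = s.card + 1)
    (hs : s.Nonempty) : ∃ k : ℕ, (bdc R t) s = (-1 : R) ^ k := by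
  obtain ⟨v, hvt, herase, _⟩ := exists_v0 hst hcard
  have ht2 : 2 ≤ t.card := by
    have := Finset.card_pos.mpr hs; omega
  exact ⟨_, by rw [← herase, bdc_apply_erase hvt ht2]⟩

lemma eps_mul {s t : Finset V} (hst : s ⊂ t) (hcard : t.card = s.card + 1)
    (hs : s.Nonempty) : (bdc R t) s * (bdc R t) s = 1 := by
  obtain ⟨k, hk⟩ := eps_exists (R := R) hst hcard hs
  rw [hk, ← pow_add]
  exact Even.neg_one_pow ⟨k, rfl⟩

/-- The homotopy `d`. -/
noncomputable def dd {V : Type*} [LinearOrder V] (R : Type*) [CommRing R] (s t : Finset V) :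
    (Finset V →₀ R) →ₗ[R] (Finset V →₀ R) :=
  (LinearMap.toSpanSingleton R (Finset V →₀ R)
    ((bdc R t) s • Finsupp.single t (1 : R))).comp (Finsupp.lapply s)

lemma dd_apply (s t : Finset V) (x : Finset V →₀ R) :
    dd R s t x = x s • ((bdc R t) s • Finsupp.single t (1 : R)) := rfl

/-- The retraction `r = 1 - ∂d - d∂`. -/
noncomputable def rr {V : Type*} [LinearOrder V] (R : Type*) [CommRing R] (s t : Finset V) :
    (Finset V →₀ R) →ₗ[R] (Finset V →₀ R) :=
  LinearMap.id - (bd R).comp (dd R s t) - (dd R s t).comp (bd R)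

lemma rr_apply (s t : Finset V) (x : Finset V →₀ R) :
    rr R s t x = x - bd R (dd R s t x) - dd R s t (bd R x) := rfl

lemma bd_rr (s t : Finset V) (x : Finset V →₀ R) :
    bd R (rr R s t x) = rr R s t (bd R x) := by
  simp only [rr_apply, map_sub, bd_bd, map_zero, sub_zero]

lemma rr_fix {s t : Finset V} {x : Finset V →₀ R} (hxs : x s = 0)
    (hbxs : (bd R x) s = 0) : rr R s t x = x := by
  rw [rr_apply, dd_apply, dd_apply, hxs, hbxs]
  simp

lemma RHmod_apply_eq_zero {H : Set (Finset V)} {n : ℕ} {a : Finset V}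
    (h : ∀ σ ∈ H, σ.card = n + 1 → σ ≠ a) {x : Finset V →₀ R}
    (hx : x ∈ RHmod R H n) : x a = 0 := by
  have hle : RHmod R H n ≤ LinearMap.ker (Finsupp.lapply (M := R) a) := by
    rw [RHmod, Submodule.span_le]
    rintro y ⟨σ, hσ, hc, rfl⟩
    simp [Finsupp.single_apply, h σ hσ hc]
  simpa using hle hx

lemma RHmod_mono {H K : Set (Finset V)} (h : K ⊆ H) (n : ℕ) :
    RHmod R K n ≤ RHmod R H n := by
  apply Submodule.span_mono
  rintro x ⟨σ, hσ, hc, rfl⟩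
  exact ⟨σ, h hσ, hc, rfl⟩

lemma bdc_mem_RHmod {H : Set (Finset V)} {σ : Finset V} {n : ℕ}
    (hfaces : ∀ v ∈ σ, σ.erase v ∈ H) (hc : σ.card = n + 2) :
    bdc R σ ∈ RHmod R H n := by
  rw [bdc_eq_sum (by omega)]
  refine Submodule.sum_mem _ fun v hv => Submodule.smul_mem _ _ ?_
  exact Submodule.subset_span ⟨σ.erase v, hfaces v hv,
    by rw [Finset.card_erase_of_mem hv]; omega, rfl⟩

end Aux2

section Collapse
variable {V : Type*} [LinearOrder V] {R : Type*} [CommRing R]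
variable {H H' : Set (Finset V)} {s t : Finset V}

lemma bdc_s_eq_zero (hcol : IsElemCollapse H H' s t) {σ : Finset V} (hσ : σ ∈ H)
    (hne : σ ≠ t) : (bdc R σ) s = 0 := by
  obtain ⟨hsH, htH, hst, hcard, hmax, hfaces, hH'⟩ := hcol
  refine bdc_apply_eq_zero fun v hv hcon => ?_
  have : s ⊂ σ := hcon ▸ Finset.erase_ssubset hv
  exact hne (hmax σ hσ this)

lemma rr_single_mem (hcol : IsElemCollapse H H' s t) (hs : s.Nonempty)
    {σ : Finset V} (hσ : σ ∈ H) {m : ℕ} (hc : σ.card = m + 1) :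
    rr R s t (Finsupp.single σ (1 : R)) ∈ RHmod R H' m := by
  obtain ⟨hsH, htH, hst, hcard, hmax, hfaces, hH'⟩ := hcol
  have ht2 : 2 ≤ t.card := by have := Finset.card_pos.mpr hs; omega
  by_cases hσt : σ = t
  · -- r e_t = 0
    rw [hσt]
    have h1 : dd R s t (Finsupp.single t (1 : R)) = 0 := by
      rw [dd_apply, Finsupp.single_apply, if_neg (fun h => hst.ne h.symm), zero_smul]
    have h2 : dd R s t (bd R (Finsupp.single t (1 : R))) = Finsupp.single t (1 : R) := by
      rw [bd_single, one_smul, dd_apply, smul_smul,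
        eps_mul hst hcard hs (R := R), one_smul]
    rw [rr_apply, h1, map_zero, sub_zero, h2, sub_self]
    exact Submodule.zero_mem _
  by_cases hσs : σ = s
  · -- r e_s = e_s - ε • bdc t
    rw [hσs]
    have hsc : s.card = m + 1 := hσs ▸ hc
    obtain ⟨v₀, hv₀t, herase, huniq⟩ := exists_v0 hst hcard
    have h1 : dd R s t (Finsupp.single s (1 : R)) =
        (bdc R t) s • Finsupp.single t (1 : R) := by
      rw [dd_apply, Finsupp.single_eq_same, one_smul]
    have h2 : dd R s t (bd R (Finsupp.single s (1 : R))) = 0 := by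
      rw [bd_single, one_smul, dd_apply,
        bdc_apply_eq_zero (fun v hv => (Finset.erase_ssubset hv).ne), zero_smul]
    rw [rr_apply, h1, h2, sub_zero, map_smul, bd_single, one_smul]
    have expand : ∀ ε : R, ε • bdc R t =
        (ε * (-1 : R) ^ ((t.filter (fun x => x < v₀)).card)) • Finsupp.single s (1 : R) +
        ∑ v ∈ t.erase v₀, (ε *
          (-1 : R) ^ ((t.filter (fun x => x < v)).card)) •
          Finsupp.single (t.erase v) (1 : R) := by
      intro ε
      rw [bdc_eq_sum ht2, Finset.smul_sum, ← Finset.add_sum_erase _ _ hv₀t]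
      congr 1
      · rw [smul_smul, herase]
      · exact Finset.sum_congr rfl fun v hv => by rw [smul_smul]
    have hsgn : (-1 : R) ^ ((t.filter (fun x => x < v₀)).card) = (bdc R t) s := by
      rw [← bdc_apply_erase hv₀t ht2, herase]
    have expand2 : (bdc R t) s • bdc R t = Finsupp.single s (1 : R) +
        ∑ v ∈ t.erase v₀, ((bdc R t) s *
          (-1 : R) ^ ((t.filter (fun x => x < v)).card)) •
          Finsupp.single (t.erase v) (1 : R) := by
      rw [expand ((bdc R t) s), hsgn, eps_mul hst hcard hs, one_smul]
    rw [expand2]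
    have : Finsupp.single s (1 : R) - (Finsupp.single s (1 : R) +
        ∑ v ∈ t.erase v₀, ((bdc R t) s *
          (-1 : R) ^ ((t.filter (fun x => x < v)).card)) •
          Finsupp.single (t.erase v) (1 : R)) =
        - ∑ v ∈ t.erase v₀, ((bdc R t) s *
          (-1 : R) ^ ((t.filter (fun x => x < v)).card)) •
          Finsupp.single (t.erase v) (1 : R) := by abel
    rw [this]
    refine Submodule.neg_mem _ (Submodule.sum_mem _ fun v hv => Submodule.smul_mem _ _ ?_)
    have hvt : v ∈ t := Finset.mem_of_mem_erase hv
    have hvne : v ≠ v₀ := Finset.ne_of_mem_erase hv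
    have hmem : t.erase v ∈ H := hfaces _
      (Finset.card_pos.mp (by rw [Finset.card_erase_of_mem hvt]; omega))
      (Finset.erase_ssubset hvt)
    have hnes : t.erase v ≠ s := fun hcon => hvne (huniq v hcon)
    have hnet : t.erase v ≠ t := (Finset.erase_ssubset hvt).ne
    refine Submodule.subset_span ⟨t.erase v, ?_, ?_, rfl⟩
    · rw [hH']; exact ⟨hmem, by simp [hnes, hnet]⟩
    · rw [Finset.card_erase_of_mem hvt]
      omega
  · -- r e_σ = e_σ
    have h1 : dd R s t (Finsupp.single σ (1 : R)) = 0 := by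
      rw [dd_apply, Finsupp.single_apply, if_neg hσs, zero_smul]
    have h2 : dd R s t (bd R (Finsupp.single σ (1 : R))) = 0 := by
      rw [bd_single, one_smul, dd_apply,
        bdc_s_eq_zero ⟨hsH, htH, hst, hcard, hmax, hfaces, hH'⟩ hσ hσt, zero_smul]
    rw [rr_apply, h1, h2, map_zero, sub_zero, sub_zero]
    refine Submodule.subset_span ⟨σ, ?_, hc, rfl⟩
    rw [hH']; exact ⟨hσ, by simp [hσs, hσt]⟩

lemma rr_mem_RHmod (hcol : IsElemCollapse H H' s t) (hs : s.Nonempty)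
    {m : ℕ} {x : Finset V →₀ R} (hx : x ∈ RHmod R H m) :
    rr R s t x ∈ RHmod R H' m := by
  refine Submodule.span_induction ?_ ?_ ?_ ?_ hx
  · rintro y ⟨σ, hσ, hc, rfl⟩
    exact rr_single_mem hcol hs hσ hc
  · rw [map_zero]; exact Submodule.zero_mem _
  · intro a b _ _ ha hb; rw [map_add]; exact Submodule.add_mem _ ha hb
  · intro c a _ ha; rw [map_smul]; exact Submodule.smul_mem _ _ ha

end Collapse

section Level2
variable {V : Type*} [LinearOrder V] {R : Type*} [CommRing R]
variable {H H' : Set (Finset V)} {s t : Finset V}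

lemma mem_infC_iff {n : ℕ} {x : Finset V →₀ R} :
    x ∈ infC R H n ↔ x ∈ RHmod R H n ∧ bd R x ∈ RHmod R H (n - 1) := by
  rw [infC, Submodule.mem_inf, Submodule.mem_comap]

lemma mem_cycC_iff {n : ℕ} {x : Finset V →₀ R} :
    x ∈ cycC R H n ↔ x ∈ infC R H n ∧ bd R x = 0 := by
  rw [cycC, Submodule.mem_inf, LinearMap.mem_ker]

lemma infC_mono (h : H' ⊆ H) (n : ℕ) : infC R H' n ≤ infC R H n :=
  inf_le_inf (RHmod_mono h n) (Submodule.comap_mono (RHmod_mono h _))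

lemma rr_mem_infC (hcol : IsElemCollapse H H' s t) (hs : s.Nonempty)
    {n : ℕ} {x : Finset V →₀ R} (hx : x ∈ infC R H n) :
    rr R s t x ∈ infC R H' n := by
  rw [mem_infC_iff] at hx ⊢
  refine ⟨rr_mem_RHmod hcol hs hx.1, ?_⟩
  rw [bd_rr]
  exact rr_mem_RHmod hcol hs hx.2

lemma s_not_mem' (hcol : IsElemCollapse H H' s t) : s ∉ H' := by
  rw [hcol.2.2.2.2.2.2]
  simp

lemma rr_fix_of_mem_infC (hcol : IsElemCollapse H H' s t)
    {n : ℕ} {x : Finset V →₀ R} (hx : x ∈ infC R H' n) :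
    rr R s t x = x := by
  have hs' := s_not_mem' hcol
  rw [mem_infC_iff] at hx
  refine rr_fix ?_ ?_
  · exact RHmod_apply_eq_zero (fun σ hσ _ hcon => hs' (by rwa [hcon] at hσ)) hx.1
  · exact RHmod_apply_eq_zero (fun σ hσ _ hcon => hs' (by rwa [hcon] at hσ)) hx.2

lemma single_t_mem_infC (hcol : IsElemCollapse H H' s t) (hs : s.Nonempty)
    {n : ℕ} (hcs : s.card = n + 1) :
    Finsupp.single t (1 : R) ∈ infC R H (n + 1) := by
  obtain ⟨hsH, htH, hst, hcard, hmax, hfaces, hH'⟩ := hcol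
  have htc : t.card = n + 2 := by omega
  rw [mem_infC_iff]
  constructor
  · exact Submodule.subset_span ⟨t, htH, htc, rfl⟩
  · rw [bd_single, one_smul]
    have : (n + 1 : ℕ) - 1 = n := rfl
    rw [this]
    refine bdc_mem_RHmod (fun v hv => hfaces _ ?_ (Finset.erase_ssubset hv)) htc
    rw [← Finset.card_pos, Finset.card_erase_of_mem hv]
    omega

lemma dd_mem_infC (hcol : IsElemCollapse H H' s t) (hs : s.Nonempty)
    {n : ℕ} {x : Finset V →₀ R} (hx : x ∈ infC R H n) :
    dd R s t x ∈ infC R H (n + 1) := by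
  by_cases hxs : x s = 0
  · rw [dd_apply, hxs, zero_smul]
    exact Submodule.zero_mem _
  · have hcs : s.card = n + 1 := by
      by_contra hcon
      exact hxs (RHmod_apply_eq_zero (fun σ hσ hc hcon2 => hcon (by rwa [hcon2] at hc))
        (mem_infC_iff.mp hx).1)
    rw [dd_apply]
    exact Submodule.smul_mem _ _ (Submodule.smul_mem _ _
      (single_t_mem_infC hcol hs hcs))

end Level2

section AuxEq
variable {R : Type*} [CommRing R]



lemma homology_equiv_aux {M : Type*} [AddCommGroup M] [Module R M]
    (Z Z' B B' : Submodule R M) (hZ : Z' ≤ Z) (hB : B' ≤ B) (ρ : M →ₗ[R] M)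
    (hρZ : ∀ x ∈ Z, ρ x ∈ Z') (hρB : ∀ x ∈ B, ρ x ∈ B')
    (hfix : ∀ x ∈ Z', ρ x = x) (hhtp : ∀ x ∈ Z, ρ x - x ∈ B) :
    Nonempty (↥(Z.map B.mkQ) ≃ₗ[R] ↥(Z'.map B'.mkQ)) := by
  set qH : ↥Z →ₗ[R] M ⧸ B := B.mkQ ∘ₗ Z.subtype with hqH
  set qH' : ↥Z' →ₗ[R] M ⧸ B' := B'.mkQ ∘ₗ Z'.subtype with hqH'
  have hrange : LinearMap.range qH = Z.map B.mkQ := by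
    rw [hqH, LinearMap.range_comp, Submodule.range_subtype]
  have hrange' : LinearMap.range qH' = Z'.map B'.mkQ := by
    rw [hqH', LinearMap.range_comp, Submodule.range_subtype]
  have hker : ∀ x : ↥Z, x ∈ LinearMap.ker qH ↔ (x : M) ∈ B := by
    intro x
    rw [LinearMap.mem_ker, hqH, LinearMap.comp_apply, Submodule.subtype_apply,
      Submodule.mkQ_apply, Submodule.Quotient.mk_eq_zero]
  have hker' : ∀ x : ↥Z', x ∈ LinearMap.ker qH' ↔ (x : M) ∈ B' := by
    intro x
    rw [LinearMap.mem_ker, hqH', LinearMap.comp_apply, Submodule.subtype_apply,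
      Submodule.mkQ_apply, Submodule.Quotient.mk_eq_zero]
  set ρ' : ↥Z →ₗ[R] ↥Z' := ρ.restrict (p := Z) (q := Z') hρZ with hρ'
  set ι : ↥Z' →ₗ[R] ↥Z := Submodule.inclusion hZ with hι
  have hFcond : LinearMap.ker qH ≤ Submodule.comap ρ' (LinearMap.ker qH') := by
    intro x hx
    rw [Submodule.mem_comap, hker']
    exact hρB _ ((hker x).mp hx)
  have hGcond : LinearMap.ker qH' ≤ Submodule.comap ι (LinearMap.ker qH) := by
    intro x hx
    rw [Submodule.mem_comap, hker]
    exact hB ((hker' x).mp hx)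
  set F := Submodule.mapQ _ _ ρ' hFcond with hF
  set G := Submodule.mapQ _ _ ι hGcond with hG
  have h1 : F.comp G = LinearMap.id := by
    apply Submodule.linearMap_qext
    ext x
    simp only [LinearMap.comp_apply, Submodule.mkQ_apply, Submodule.mapQ_apply,
      LinearMap.id_apply, hF, hG]
    congr 1
    exact Subtype.ext (hfix _ x.2)
  have h2 : G.comp F = LinearMap.id := by
    apply Submodule.linearMap_qext
    ext x
    simp only [LinearMap.comp_apply, Submodule.mkQ_apply, Submodule.mapQ_apply,
      LinearMap.id_apply, hF, hG]
    rw [Submodule.Quotient.eq]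
    rw [hker]
    have : ((ι (ρ' x) : ↥Z) : M) - (x : M) = ρ (x : M) - (x : M) := rfl
    rw [show (ι (ρ' x) : ↥Z) - x = ⟨ρ (x:M) - (x:M), by
      rw [← this]; exact Submodule.sub_mem Z (ι (ρ' x)).2 x.2⟩ from Subtype.ext this]
    exact hhtp _ x.2
  have e0 : (↥Z ⧸ LinearMap.ker qH) ≃ₗ[R] (↥Z' ⧸ LinearMap.ker qH') :=
    LinearEquiv.ofLinear F G h1 h2
  have e1 : ↥(Submodule.map B.mkQ Z) ≃ₗ[R] ↥(LinearMap.range qH) :=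
    LinearEquiv.ofEq _ _ hrange.symm
  have e2 : ↥(LinearMap.range qH) ≃ₗ[R] (↥Z ⧸ LinearMap.ker qH) :=
    qH.quotKerEquivRange.symm
  have e3 : (↥Z' ⧸ LinearMap.ker qH') ≃ₗ[R] ↥(LinearMap.range qH') :=
    qH'.quotKerEquivRange
  have e4 : ↥(LinearMap.range qH') ≃ₗ[R] ↥(Submodule.map B'.mkQ Z') :=
    LinearEquiv.ofEq _ _ hrange'
  exact ⟨e1.trans (e2.trans (e0.trans (e3.trans e4)))⟩

end AuxEq


section Single
variable {V : Type*} [LinearOrder V] {R : Type*} [CommRing R]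
variable {H H' : Set (Finset V)} {s t : Finset V}

lemma emH_single (hcol : IsElemCollapse H H' s t) (hs : s.Nonempty) (n : ℕ) :
    Nonempty (emH R H n ≃ₗ[R] emH R H' n) := by
  have hsub : H' ⊆ H := by rw [hcol.2.2.2.2.2.2]; exact Set.diff_subset
  refine homology_equiv_aux (cycC R H n) (cycC R H' n)
    (Submodule.map (bd R) (infC R H (n+1))) (Submodule.map (bd R) (infC R H' (n+1)))
    (inf_le_inf (infC_mono hsub n) le_rfl)
    (Submodule.map_mono (infC_mono hsub (n+1)))
    (rr R s t) ?_ ?_ ?_ ?_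
  · intro x hx
    rw [mem_cycC_iff] at hx ⊢
    refine ⟨rr_mem_infC hcol hs hx.1, ?_⟩
    rw [bd_rr, hx.2, map_zero]
  · rintro x ⟨y, hy, rfl⟩
    exact ⟨rr R s t y, rr_mem_infC hcol hs hy, (bd_rr s t y)⟩
  · intro x hx
    exact rr_fix_of_mem_infC hcol (mem_cycC_iff.mp hx).1
  · intro x hx
    rw [mem_cycC_iff] at hx
    have : rr R s t x - x = bd R (-(dd R s t x)) := by
      rw [rr_apply, hx.2, map_zero, sub_zero, map_neg]
      abel
    rw [this]
    exact ⟨-(dd R s t x), Submodule.neg_mem _ (dd_mem_infC hcol hs hx.1), rfl⟩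

end Single





section Struct
variable {V : Type*} [LinearOrder V]
variable {H H' : Set (Finset V)} {s t : Finset V}

lemma collapse_assoc (hcol : IsElemCollapse H H' s t) (hs : s.Nonempty) :
    IsElemCollapse (assocSC H) (assocSC H') s t := by
  obtain ⟨hsH, htH, hst, hcard, hmax, hfaces, hH'⟩ := hcol
  have ht : t.Nonempty := hs.mono hst.subset
  have hmax' : ∀ ρ ∈ assocSC H, s ⊂ ρ → ρ = t := by
    rintro ρ ⟨hρne, σ, hσ, hρσ⟩ hsρ
    have hσt : σ = t := hmax σ hσ (hsρ.trans_subset hρσ)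
    rw [hσt] at hρσ
    have h1 : s.card < ρ.card := Finset.card_lt_card hsρ
    have h2 : ρ.card ≤ t.card := Finset.card_le_card hρσ
    exact Finset.eq_of_subset_of_card_le hρσ (by omega)
  refine ⟨⟨hs, s, hsH, subset_rfl⟩, ⟨ht, t, htH, subset_rfl⟩, hst, hcard, hmax', ?_, ?_⟩
  · exact fun η hηne hηt => ⟨hηne, t, htH, hηt.subset⟩
  · ext ρ
    constructor
    · rintro ⟨hρne, σ, hσ, hρσ⟩
      rw [hH'] at hσ
      obtain ⟨hσH, hσst⟩ := hσ
      simp only [Set.mem_insert_iff, Set.mem_singleton_iff] at hσst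
      push_neg at hσst
      have hρH : ρ ∈ assocSC H := ⟨hρne, σ, hσH, hρσ⟩
      refine ⟨hρH, ?_⟩
      simp only [Set.mem_insert_iff, Set.mem_singleton_iff]
      push_neg
      constructor
      · rintro rfl
        exact hσst.2 (hmax σ hσH (hρσ.ssubset_of_ne (Ne.symm hσst.1) |>.trans_eq rfl))
      · rintro rfl
        exact hσst.2 (hmax σ hσH (hst.trans_subset hρσ))
    · rintro ⟨⟨hρne, σ, hσ, hρσ⟩, hρst⟩
      simp only [Set.mem_insert_iff, Set.mem_singleton_iff] at hρst
      push_neg at hρst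
      by_cases hσst : σ = s ∨ σ = t
      · -- ρ is itself a nonempty proper subset of t, other than s and t
        have hρt : ρ ⊂ t := by
          rcases hσst with rfl | rfl
          · exact (hρσ.trans hst.subset).ssubset_of_ne hρst.2
          · exact hρσ.ssubset_of_ne hρst.2
        have : ρ ∈ H := hfaces ρ hρne hρt
        refine ⟨hρne, ρ, ?_, subset_rfl⟩
        rw [hH']
        refine ⟨this, ?_⟩
        simp only [Set.mem_insert_iff, Set.mem_singleton_iff]
        push_neg
        exact hρst
      · push_neg at hσst
        refine ⟨hρne, σ, ?_, hρσ⟩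
        rw [hH']
        refine ⟨hσ, ?_⟩
        simp only [Set.mem_insert_iff, Set.mem_singleton_iff]
        push_neg
        exact hσst

lemma collapse_lower (hcol : IsElemCollapse H H' s t) (hs : s.Nonempty) :
    IsElemCollapse (lowerSC H) (lowerSC H') s t := by
  obtain ⟨hsH, htH, hst, hcard, hmax, hfaces, hH'⟩ := hcol
  have hsδ : s ∈ lowerSC H := by
    refine ⟨hsH, fun τ hτne hτs => ?_⟩
    rcases eq_or_ne τ s with rfl | hne
    · exact hsH
    · exact hfaces τ hτne ((hτs.ssubset_of_ne hne).trans hst)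
  have htδ : t ∈ lowerSC H := by
    refine ⟨htH, fun τ hτne hτt => ?_⟩
    rcases eq_or_ne τ t with rfl | hne
    · exact htH
    · exact hfaces τ hτne (hτt.ssubset_of_ne hne)
  refine ⟨hsδ, htδ, hst, hcard, fun ρ hρ hsρ => hmax ρ hρ.1 hsρ, ?_, ?_⟩
  · intro η hηne hηt
    refine ⟨hfaces η hηne hηt, fun τ hτne hτη => ?_⟩
    exact hfaces τ hτne (hτη.trans_ssubset hηt)
  · ext ρ
    constructor
    · rintro ⟨hρH', hsub⟩
      rw [hH'] at hρH'
      obtain ⟨hρH, hρst⟩ := hρH'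
      refine ⟨⟨hρH, fun τ hτne hτρ => ?_⟩, hρst⟩
      have h := hsub τ hτne hτρ
      rw [hH'] at h
      exact h.1
    · rintro ⟨⟨hρH, hsub⟩, hρst⟩
      have hρs : ρ ≠ s ∧ ρ ≠ t := by
        simpa [Set.mem_insert_iff] using hρst
      refine ⟨?_, fun τ hτne hτρ => ?_⟩
      · rw [hH']
        exact ⟨hρH, by simp [hρs.1, hρs.2]⟩
      · rw [hH']
        refine ⟨hsub τ hτne hτρ, ?_⟩
        have hτs : τ ≠ s := by
          rintro rfl
          exact hρs.2 (hmax ρ hρH (hτρ.ssubset_of_ne (Ne.symm hρs.1)))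
        have hτt : τ ≠ t := by
          rintro rfl
          exact hρs.2 (hmax ρ hρH (hst.trans_subset hτρ))
        simp [hτs, hτt]
end Struct

section Main
variable {V : Type*} [LinearOrder V]

lemma collapse_step (R : Type*) [CommRing R] {H H' : Set (Finset V)} {s t : Finset V}
    (hH : IsHypergraph H) (hcol : IsElemCollapse H H' s t) :
    IsHypergraph H' ∧ ∀ n : ℕ,
      Nonempty (emH R H n ≃ₗ[R] emH R H' n) ∧
      Nonempty (emH R (assocSC H) n ≃ₗ[R] emH R (assocSC H') n) ∧
      Nonempty (emH R (lowerSC H) n ≃ₗ[R] emH R (lowerSC H') n) := by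
  have hs : s.Nonempty := hH s hcol.1
  have hsub : H' ⊆ H := by rw [hcol.2.2.2.2.2.2]; exact Set.diff_subset
  refine ⟨fun e he => hH e (hsub he), fun n => ?_⟩
  exact ⟨emH_single hcol hs n, emH_single (collapse_assoc hcol hs) hs n,
    emH_single (collapse_lower hcol hs) hs n⟩

end Main


/-- Collapses preserve the embedded homology: if `H` collapses onto `H'` then
`H_*(H;R) ≅ H_*(H';R)`, `H_*(ΔH) ≅ H_*(ΔH')` and `H_*(δH) ≅ H_*(δH')`. -/
theorem emH_of_collapses (R : Type*) [CommRing R] {V : Type*} [LinearOrder V]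
    (H H' : Set (Finset V)) (hH : IsHypergraph H) (hcol : Collapses H H') :
    ∀ n : ℕ,
      Nonempty (emH R H n ≃ₗ[R] emH R H' n) ∧
      Nonempty (emH R (assocSC H) n ≃ₗ[R] emH R (assocSC H') n) ∧
      Nonempty (emH R (lowerSC H) n ≃ₗ[R] emH R (lowerSC H') n) := by
  suffices h : IsHypergraph H' ∧ ∀ n : ℕ,
      Nonempty (emH R H n ≃ₗ[R] emH R H' n) ∧
      Nonempty (emH R (assocSC H) n ≃ₗ[R] emH R (assocSC H') n) ∧
      Nonempty (emH R (lowerSC H) n ≃ₗ[R] emH R (lowerSC H') n) from h.2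
  induction hcol with
  | refl => exact ⟨hH, fun n => ⟨⟨LinearEquiv.refl R _⟩, ⟨LinearEquiv.refl R _⟩,
      ⟨LinearEquiv.refl R _⟩⟩⟩
  | tail hab hbc ih =>
    obtain ⟨hB, hiso⟩ := ih
    obtain ⟨s, t, hcol⟩ := hbc
    obtain ⟨hC, hiso2⟩ := collapse_step R hB hcol
    refine ⟨hC, fun n => ?_⟩
    obtain ⟨⟨e1⟩, ⟨e2⟩, ⟨e3⟩⟩ := hiso n
    obtain ⟨⟨f1⟩, ⟨f2⟩, ⟨f3⟩⟩ := hiso2 n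
    exact ⟨⟨e1.trans f1⟩, ⟨e2.trans f2⟩, ⟨e3.trans f3⟩⟩
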